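/- Let f : ℝ≥0^m → ℂ be given by f(x₁,…,x_m) = ∑_{j=0}^∞ b_j (x₁⋯x_m)^j with all b_j ≥ 0 (and the series convergent on ℝ≥0^m). Then for all n ∈ ℕ and all positive semidefinite n×n block matrices (A_{αβ}), (B_{αβ}) with positive semidefinite m×m blocks such that each product A_{αβ}B_{αβ} is positive semidefinite, the n×n matrix (f(A_{αβ}B_{αβ})) is positive semidefinite. -/

import Mathlib

open Matrix
open scoped ComplexOrder

/-- A block matrix `(A_{αβ})` with `m×m` complex entries is positive semidefinite
if the corresponding `mn×mn` matrix is positive semidefinite. -/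
def IsPosSemidefBlock {m n : ℕ} (A : Fin n → Fin n → Matrix (Fin m) (Fin m) ℂ) : Prop :=
  (Matrix.of fun p q : Fin n × Fin m => A p.1 q.1 p.2 q.2).PosSemidef


open scoped MatrixOrder in
theorem Matrix.posSemidef_iff_eq_transpose_mul_self {n : Type*} [Fintype n] [DecidableEq n]
    {A : Matrix n n ℂ} : A.PosSemidef ↔ ∃ B : Matrix n n ℂ, A = Bᴴ * B := by
  refine ⟨fun h => ?_, fun ⟨B, hB⟩ => hB ▸ posSemidef_conjTranspose_mul_self B⟩
  obtain ⟨B, hB⟩ := CStarAlgebra.nonneg_iff_eq_star_mul_self.mp h.nonneg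
  exact ⟨B, hB⟩

lemma smul_psd {n : Type*} [Fintype n] {M : Matrix n n ℂ} (hM : M.PosSemidef)
    {c : ℝ} (hc : 0 ≤ c) : ((c : ℂ) • M).PosSemidef := by
  rw [posSemidef_iff_dotProduct_mulVec]
  constructor
  · show ((c:ℂ) • M)ᴴ = _
    rw [conjTranspose_smul, hM.1.eq]
    congr 1
    simp
  · intro x
    rw [smul_mulVec, dotProduct_smul, smul_eq_mul]
    exact mul_nonneg (by exact_mod_cast hc) (hM.dotProduct_mulVec_nonneg x)

lemma hadamard_psd {n : Type*} [Fintype n] [DecidableEq n] {P Q : Matrix n n ℂ}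
    (hP : P.PosSemidef) (hQ : Q.PosSemidef) :
    (Matrix.of fun α β => P α β * Q α β).PosSemidef := by
  obtain ⟨X, hX⟩ := posSemidef_iff_eq_transpose_mul_self.mp hP
  obtain ⟨Y, hY⟩ := posSemidef_iff_eq_transpose_mul_self.mp hQ
  have h : (Matrix.of fun α β => P α β * Q α β)
      = (Matrix.of fun (p : n × n) α => X p.1 α * Y p.2 α)ᴴ *
        (Matrix.of fun (p : n × n) α => X p.1 α * Y p.2 α) := by
    ext α β
    subst hX hY
    simp only [Matrix.of_apply, Matrix.mul_apply, conjTranspose_apply, Matrix.of_apply,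
      Fintype.sum_prod_type, Finset.sum_mul_sum, star_mul']
    refine Finset.sum_congr rfl fun k _ => Finset.sum_congr rfl fun l _ => ?_
    ring
  rw [h]
  exact posSemidef_conjTranspose_mul_self _

lemma hpow_psd {n : Type*} [Fintype n] [DecidableEq n] {C : Matrix n n ℂ}
    (hC : C.PosSemidef) (j : ℕ) :
    (Matrix.of fun α β => C α β ^ j).PosSemidef := by
  induction j with
  | zero =>
    have h : (Matrix.of fun (_ _ : n) => (1:ℂ))
        = (Matrix.of fun (_ : Fin 1) (_ : n) => (1:ℂ))ᴴ *
          (Matrix.of fun (_ : Fin 1) (_ : n) => (1:ℂ)) := by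
      ext α β; simp [Matrix.mul_apply]
    simpa only [pow_zero] using h ▸ posSemidef_conjTranspose_mul_self
      (Matrix.of fun (_ : Fin 1) (_ : n) => (1:ℂ))
  | succ j ih =>
    have := hadamard_psd hC ih
    simp only [Matrix.of_apply] at this
    simpa only [pow_succ, mul_comm] using this


lemma sum_perm_det {m : ℕ} (M : Matrix (Fin m) (Fin m) ℂ) :
    ∑ σ : Equiv.Perm (Fin m), ∑ τ : Equiv.Perm (Fin m),
      ((Equiv.Perm.sign σ : ℤ) : ℂ) * ((Equiv.Perm.sign τ : ℤ) : ℂ) * ∏ i, M (σ i) (τ i)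
      = (m.factorial : ℂ) * M.det := by
  have h1 : ∀ σ : Equiv.Perm (Fin m),
      ∑ τ : Equiv.Perm (Fin m),
        ((Equiv.Perm.sign σ : ℤ) : ℂ) * ((Equiv.Perm.sign τ : ℤ) : ℂ) * ∏ i, M (σ i) (τ i)
        = M.det := by
    intro σ
    have hsq : ((Equiv.Perm.sign σ : ℤ) : ℂ) * ((Equiv.Perm.sign σ : ℤ) : ℂ) = 1 := by
      have h := Int.units_mul_self (Equiv.Perm.sign σ)
      have h2 : ((Equiv.Perm.sign σ : ℤ) * (Equiv.Perm.sign σ : ℤ) : ℤ) = 1 := by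
        rw [← Units.val_mul, h, Units.val_one]
      exact_mod_cast h2
    rw [← Fintype.sum_equiv (Equiv.mulRight σ)
        (fun ρ => ((Equiv.Perm.sign ρ : ℤ) : ℂ) * ∏ i, M i (ρ i))
        (fun τ => ((Equiv.Perm.sign σ : ℤ) : ℂ) * ((Equiv.Perm.sign τ : ℤ) : ℂ)
          * ∏ i, M (σ i) (τ i)) ?_]
    · rw [← Matrix.det_transpose M, Matrix.det_apply]
      refine Finset.sum_congr rfl fun ρ _ => ?_
      simp [Units.smul_def, zsmul_eq_mul, Matrix.transpose_apply]
    · intro ρ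
      have hp : ∏ i, M (σ i) ((ρ * σ) i) = ∏ i, M i (ρ i) := by
        have := Equiv.prod_comp σ (fun j => M j (ρ j))
        simpa using this
      have hs : ((Equiv.Perm.sign (ρ * σ) : ℤ) : ℂ) = ((Equiv.Perm.sign ρ : ℤ) : ℂ) *
          ((Equiv.Perm.sign σ : ℤ) : ℂ) := by
        rw [Equiv.Perm.sign_mul]; push_cast; ring
      simp only [Equiv.coe_mulRight, hs, hp]
      ring_nf
      rw [mul_comm] at hsq
      calc ((Equiv.Perm.sign ρ : ℤ) : ℂ) * ∏ i, M i (ρ i)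
          = (((Equiv.Perm.sign σ : ℤ) : ℂ) * ((Equiv.Perm.sign σ : ℤ) : ℂ)) *
            (((Equiv.Perm.sign ρ : ℤ) : ℂ) * ∏ i, M i (ρ i)) := by rw [hsq, one_mul]
        _ = _ := by ring
  rw [Finset.sum_congr rfl fun σ _ => h1 σ]
  rw [Finset.sum_const, Finset.card_univ, Fintype.card_perm, Fintype.card_fin, nsmul_eq_mul]

lemma det_block_psd {m n : ℕ} {A : Fin n → Fin n → Matrix (Fin m) (Fin m) ℂ}
    (hbA : IsPosSemidefBlock A) :
    (Matrix.of fun α β : Fin n => (A α β).det).PosSemidef := by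
  obtain ⟨X, hX⟩ := posSemidef_iff_eq_transpose_mul_self.mp hbA
  have hA : ∀ α β i j, A α β i j = ∑ k, star (X k (α, i)) * X k (β, j) := by
    intro α β i j
    have h : (Matrix.of fun p q : Fin n × Fin m => A p.1 q.1 p.2 q.2) (α, i) (β, j)
        = (Xᴴ * X) (α, i) (β, j) := by rw [hX]
    simpa [Matrix.mul_apply, conjTranspose_apply] using h
  set W : Matrix (Fin m → Fin n × Fin m) (Fin n) ℂ :=
    Matrix.of fun g α => ∑ σ : Equiv.Perm (Fin m),
      ((Equiv.Perm.sign σ : ℤ) : ℂ) * ∏ i, X (g i) (α, σ i) with hWdef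
  have key : ∀ α β, (Wᴴ * W) α β = (m.factorial : ℂ) * (A α β).det := by
    intro α β
    rw [← sum_perm_det (A α β), Matrix.mul_apply]
    have hstar : ∀ g, Wᴴ α g = ∑ σ : Equiv.Perm (Fin m),
        ((Equiv.Perm.sign σ : ℤ) : ℂ) * ∏ i, star (X (g i) (α, σ i)) := by
      intro g
      rw [conjTranspose_apply, hWdef, Matrix.of_apply, star_sum]
      refine Finset.sum_congr rfl fun σ _ => ?_
      rw [star_mul', star_prod]
      simp [mul_comm]
    calc ∑ g, Wᴴ α g * W g β
        = ∑ g : Fin m → Fin n × Fin m, ∑ σ : Equiv.Perm (Fin m), ∑ τ : Equiv.Perm (Fin m),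
            ((Equiv.Perm.sign σ : ℤ) : ℂ) * ((Equiv.Perm.sign τ : ℤ) : ℂ) *
            ∏ i, (star (X (g i) (α, σ i)) * X (g i) (β, τ i)) := by
          refine Finset.sum_congr rfl fun g _ => ?_
          rw [hstar, hWdef, Matrix.of_apply, Finset.sum_mul_sum]
          refine Finset.sum_congr rfl fun σ _ => Finset.sum_congr rfl fun τ _ => ?_
          rw [Finset.prod_mul_distrib]
          ring
      _ = ∑ σ : Equiv.Perm (Fin m), ∑ τ : Equiv.Perm (Fin m),
            ((Equiv.Perm.sign σ : ℤ) : ℂ) * ((Equiv.Perm.sign τ : ℤ) : ℂ) *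
            ∑ g : Fin m → Fin n × Fin m, ∏ i, (star (X (g i) (α, σ i)) * X (g i) (β, τ i)) := by
          rw [Finset.sum_comm]
          refine Finset.sum_congr rfl fun σ _ => ?_
          rw [Finset.sum_comm]
          refine Finset.sum_congr rfl fun τ _ => ?_
          rw [Finset.mul_sum]
      _ = ∑ σ : Equiv.Perm (Fin m), ∑ τ : Equiv.Perm (Fin m),
            ((Equiv.Perm.sign σ : ℤ) : ℂ) * ((Equiv.Perm.sign τ : ℤ) : ℂ) *
            ∏ i, A α β (σ i) (τ i) := by
          refine Finset.sum_congr rfl fun σ _ => Finset.sum_congr rfl fun τ _ => ?_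
          congr 1
          rw [← Fintype.prod_sum (fun i k => star (X k (α, σ i)) * X k (β, τ i))]
          exact Finset.prod_congr rfl fun i _ => (hA α β (σ i) (τ i)).symm
  have key2 : (Matrix.of fun α β : Fin n => (A α β).det)
      = (((m.factorial : ℝ)⁻¹ : ℝ) : ℂ) • (Wᴴ * W) := by
    ext α β
    rw [Matrix.smul_apply, key, smul_eq_mul, Matrix.of_apply]
    have hm : ((m.factorial : ℕ) : ℂ) ≠ 0 := Nat.cast_ne_zero.mpr m.factorial_ne_zero
    push_cast
    field_simp
  rw [key2]
  exact smul_psd (posSemidef_conjTranspose_mul_self W) (by positivity)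

theorem stmt11 (m : ℕ) (b : ℕ → ℝ) (hb : ∀ j, 0 ≤ b j)
    (hconv : ∀ x : Fin m → ℝ, (∀ i, 0 ≤ x i) →
      Summable fun j : ℕ => b j * (∏ i, x i) ^ j)
    (n : ℕ) (A B : Fin n → Fin n → Matrix (Fin m) (Fin m) ℂ)
    (hA : ∀ α β, (A α β).PosSemidef) (hB : ∀ α β, (B α β).PosSemidef)
    (hbA : IsPosSemidefBlock A) (hbB : IsPosSemidefBlock B)
    (hAB : ∀ α β, (A α β * B α β).PosSemidef) :
    (Matrix.of fun α β : Fin n =>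
      ∑' j : ℕ, (b j : ℂ) *
        (∏ i, ((hAB α β).isHermitian.eigenvalues i : ℂ)) ^ j).PosSemidef := by
  classical
  set C : Matrix (Fin n) (Fin n) ℂ :=
    Matrix.of fun α β : Fin n => (A α β).det * (B α β).det with hCdef
  have hC : C.PosSemidef := hadamard_psd (det_block_psd hbA) (det_block_psd hbB)
  set r : Fin n → Fin n → ℝ := fun α β => ∏ i, (hAB α β).isHermitian.eigenvalues i with hrdef
  have hr0 : ∀ α β, 0 ≤ r α β := fun α β =>
    Finset.prod_nonneg fun i _ => (hAB α β).eigenvalues_nonneg i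
  have hCe : ∀ α β, C α β = ((r α β : ℝ) : ℂ) := by
    intro α β
    rw [hCdef, Matrix.of_apply, ← Matrix.det_mul,
      (hAB α β).isHermitian.det_eq_prod_eigenvalues, hrdef]
    push_cast
    rfl
  have hprod : ∀ α β, (∏ i, ((hAB α β).isHermitian.eigenvalues i : ℂ)) = C α β := by
    intro α β
    rw [hCe, hrdef]
    push_cast
    rfl
  -- real summability
  have hs : ∀ α β, Summable fun j : ℕ => b j * (r α β) ^ j := by
    intro α β
    exact hconv (fun i => (hAB α β).isHermitian.eigenvalues i)
      (fun i => (hAB α β).eigenvalues_nonneg i)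
  -- complex summability
  have hsC : ∀ α β, Summable fun j : ℕ => (b j : ℂ) * C α β ^ j := by
    intro α β
    refine Summable.congr ((hs α β).map (Complex.ofRealCLM : ℝ →L[ℝ] ℂ)
      Complex.ofRealCLM.continuous) fun j => ?_
    simp only [Function.comp_apply, Complex.ofRealCLM_apply, hCe α β]
    push_cast
    ring
  -- rewrite entries
  have hentry : ∀ α β, (∑' j : ℕ, (b j : ℂ) *
      (∏ i, ((hAB α β).isHermitian.eigenvalues i : ℂ)) ^ j)
      = ∑' j : ℕ, (b j : ℂ) * C α β ^ j := by
    intro α β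
    rw [hprod α β]
  rw [posSemidef_iff_dotProduct_mulVec]
  constructor
  · -- Hermitian
    ext α β
    rw [conjTranspose_apply, Matrix.of_apply, Matrix.of_apply, hentry, hentry, tsum_star]
    congr 1
    ext j
    have h1 : star (C β α) = C α β := by
      have h := congrFun (congrFun hC.1 α) β
      rwa [conjTranspose_apply] at h
    rw [star_mul', star_pow, h1]
    congr 1
    simp
  · -- quadratic form
    intro x
    letI := Complex.orderClosedTopology
    have hsum1 : ∀ α β, Summable fun j : ℕ => star (x α) * ((b j : ℂ) * C α β ^ j * x β) :=
      fun α β => (((hsC α β).mul_right (x β)).mul_left (star (x α)))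
    have hstep : ∀ α, star (x α) * ((Matrix.of fun α β : Fin n =>
        ∑' j : ℕ, (b j : ℂ) * (∏ i, ((hAB α β).isHermitian.eigenvalues i : ℂ)) ^ j) *ᵥ x) α
        = ∑' j : ℕ, ∑ β, star (x α) * ((b j : ℂ) * C α β ^ j * x β) := by
      intro α
      rw [mulVec, dotProduct, Finset.mul_sum]
      refine (Finset.sum_congr rfl fun β _ => ?_).trans
        (Summable.tsum_finsetSum (fun β _ => hsum1 α β)).symm
      rw [Matrix.of_apply, hentry, ← tsum_mul_right, ← tsum_mul_left]
    have hform : star x ⬝ᵥ ((Matrix.of fun α β : Fin n =>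
        ∑' j : ℕ, (b j : ℂ) * (∏ i, ((hAB α β).isHermitian.eigenvalues i : ℂ)) ^ j) *ᵥ x)
        = ∑' j : ℕ, ∑ α, ∑ β, star (x α) * ((b j : ℂ) * C α β ^ j * x β) := by
      rw [dotProduct]
      refine (Finset.sum_congr rfl fun α _ => ?_).trans
        (Summable.tsum_finsetSum (fun α _ => summable_sum (fun β _ => hsum1 α β))).symm
      exact hstep α
    rw [hform]
    refine tsum_nonneg fun j => ?_
    have hq : ∑ α, ∑ β, star (x α) * ((b j : ℂ) * C α β ^ j * x β)
        = (b j : ℂ) * (star x ⬝ᵥ ((Matrix.of fun α β : Fin n => C α β ^ j) *ᵥ x)) := by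
      rw [dotProduct, Finset.mul_sum]
      refine Finset.sum_congr rfl fun α _ => ?_
      rw [mulVec, dotProduct, Pi.star_apply, Finset.mul_sum, Finset.mul_sum]
      refine Finset.sum_congr rfl fun β _ => ?_
      rw [Matrix.of_apply]
      ring
    rw [hq]
    exact mul_nonneg (by exact_mod_cast hb j) ((hpow_psd hC j).dotProduct_mulVec_nonneg x)
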